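/- Let (x_j)_{j≥1} be i.i.d. Bernoulli(1/2) random variables (the binary digits of a uniform point of (0,1]). Let R_n = max_{j=1,…,n} sup{m ≥ 1 : x_j = x_{j+1} = ⋯ = x_{j+m-1} = 0} be the longest run of zeroes starting in {1,…,n}. Then for every 0 < γ < 1, lim_{n→∞} log_2 E[2^{γ R_n}] / log_2 n = γ. -/

import Mathlib

open MeasureTheory ProbabilityTheory Filter Real
open scoped ENNReal

set_option linter.unusedSectionVars false


section Aux
variable {Ω : Type*}

/-- The set of run lengths. -/
def ZSet (x : ℕ → Ω → Bool) (n : ℕ) (ω : Ω) : Set ℕ :=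
  {m : ℕ | 1 ≤ m ∧ ∃ j, 1 ≤ j ∧ j ≤ n ∧ ∀ i < m, x (j + i) ω = false}

variable {x : ℕ → Ω → Bool} {n : ℕ} {ω : Ω}

lemma ZSet.mono {m m' : ℕ} (h : m ∈ ZSet x n ω) (h1 : 1 ≤ m') (h2 : m' ≤ m) :
    m' ∈ ZSet x n ω := by
  obtain ⟨-, j, hj1, hjn, hrun⟩ := h
  exact ⟨h1, j, hj1, hjn, fun i hi => hrun i (lt_of_lt_of_le hi h2)⟩

lemma ZSet.bddAbove {m₀ : ℕ} (h : m₀ + 1 ∉ ZSet x n ω) : BddAbove (ZSet x n ω) := by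
  refine ⟨m₀, fun m hm => ?_⟩
  by_contra hcon
  exact h (ZSet.mono hm (by omega) (by omega))

/-- All run lengths are achieved (degenerate unbounded case). -/
def Unb (x : ℕ → Ω → Bool) (n : ℕ) (ω : Ω) : Prop := ∀ m : ℕ, m + 1 ∈ ZSet x n ω

lemma ZSet.not_bddAbove (h : Unb x n ω) : ¬ BddAbove (ZSet x n ω) := by
  rintro ⟨b, hb⟩
  exact absurd (hb (h b)) (by omega)

lemma zset_sSup_zero_of_unb (h : Unb x n ω) : sSup (ZSet x n ω) = 0 := by
  rw [csSup_of_not_bddAbove (ZSet.not_bddAbove h), csSup_empty]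
  rfl

lemma mem_ZSet_of_le_sSup {r : ℕ} (h1 : 1 ≤ r) (h : r ≤ sSup (ZSet x n ω)) :
    r ∈ ZSet x n ω := by
  by_cases hb : BddAbove (ZSet x n ω)
  · rcases Set.eq_empty_or_nonempty (ZSet x n ω) with he | hne
    · rw [he, csSup_empty] at h
      exact absurd h (by simp; omega)
    · exact ZSet.mono (Nat.sSup_mem hne hb) h1 h
  · rw [csSup_of_not_bddAbove hb, csSup_empty] at h
    exact absurd h (by simp; omega)

/-- Characterization of `sSup (ZSet x n ω) = r`. -/
lemma sSup_ZSet_eq_iff {r : ℕ} :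
    sSup (ZSet x n ω) = r ↔
      (r ∈ ZSet x n ω ∧ r + 1 ∉ ZSet x n ω) ∨ (r = 0 ∧ (1 : ℕ) ∉ ZSet x n ω) ∨
        (r = 0 ∧ Unb x n ω) := by
  constructor
  · intro hr
    by_cases hu : Unb x n ω
    · have h0 := zset_sSup_zero_of_unb (x := x) (n := n) (ω := ω) hu
      rw [hr] at h0
      exact Or.inr (Or.inr ⟨h0, hu⟩)
    · rw [Unb] at hu
      push_neg at hu
      obtain ⟨m₀, hm₀⟩ := hu
      have hb := ZSet.bddAbove hm₀
      rcases Set.eq_empty_or_nonempty (ZSet x n ω) with he | hne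
      · refine Or.inr (Or.inl ⟨?_, by rw [he]; exact Set.notMem_empty _⟩)
        rw [he, csSup_empty] at hr
        exact hr.symm.trans rfl
      · have hmem := Nat.sSup_mem hne hb
        rw [hr] at hmem
        refine Or.inl ⟨hmem, fun hc => ?_⟩
        have := le_csSup hb hc
        omega
  · rintro (⟨hmem, hnot⟩ | ⟨hr0, hnot⟩ | ⟨hr0, hu⟩)
    · have hb := ZSet.bddAbove hnot
      refine le_antisymm (csSup_le ⟨r, hmem⟩ fun m hm => ?_) (le_csSup hb hmem)
      by_contra hc
      exact hnot (ZSet.mono hm (by omega) (by omega))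
    · have he : ZSet x n ω = ∅ := by
        ext m
        simp only [Set.mem_empty_iff_false, iff_false]
        intro hm
        exact hnot (ZSet.mono hm le_rfl hm.1)
      rw [he, csSup_empty, hr0]
      rfl
    · rw [zset_sSup_zero_of_unb hu, hr0]

end Aux

section Aux2
variable {Ω : Type*} [MeasurableSpace Ω] {P : Measure Ω} [IsProbabilityMeasure P]
  {x : ℕ → Ω → Bool} {n : ℕ}

/-- The event that all digits indexed by `s` are `false`. -/
def allF (x : ℕ → Ω → Bool) (s : Finset ℕ) : Set Ω := ⋂ i ∈ s, x i ⁻¹' {false}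

lemma allF_meas (hmeas : ∀ j, Measurable (x j)) (s : Finset ℕ) :
    MeasurableSet (allF x s) :=
  MeasurableSet.biInter s.countable_toSet fun i _ =>
    (hmeas i) (measurableSet_singleton false)

lemma allF_prob
    (hindep : iIndepFun x P)
    (hlaw : ∀ j, P {ω | x j ω = false} = 2⁻¹) (s : Finset ℕ) :
    P (allF x s) = 2⁻¹ ^ s.card := by
  have hx : ∀ j, P (x j ⁻¹' {false}) = 2⁻¹ := by
    intro j
    have : x j ⁻¹' {false} = {ω | x j ω = false} := by
      ext ω; simp
    rw [this]; exact hlaw j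
  rw [allF, hindep.meas_biInter (fun i _ => ⟨{false}, measurableSet_singleton false, rfl⟩)]
  rw [Finset.prod_congr rfl fun i _ => hx i, Finset.prod_const]

/-- The event of a run of `m` zeroes starting at `j`. -/
def runS (x : ℕ → Ω → Bool) (j m : ℕ) : Set Ω :=
  allF x ((Finset.range m).image (j + ·))

lemma mem_runS {j m : ℕ} {ω : Ω} : ω ∈ runS x j m ↔ ∀ i < m, x (j + i) ω = false := by
  simp only [runS, allF, Set.mem_iInter, Finset.mem_image, Finset.mem_range]
  constructor
  · intro h i hi
    have := h (j + i) ⟨i, hi, rfl⟩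
    simpa using this
  · rintro h i ⟨i', hi', rfl⟩
    simpa using h i' hi'

lemma runS_meas (hmeas : ∀ j, Measurable (x j)) (j m : ℕ) :
    MeasurableSet (runS x j m) := allF_meas hmeas _

lemma runS_prob
    (hindep : iIndepFun x P)
    (hlaw : ∀ j, P {ω | x j ω = false} = 2⁻¹) (j m : ℕ) :
    P (runS x j m) = 2⁻¹ ^ m := by
  rw [runS, allF_prob hindep hlaw, Finset.card_image_of_injective _ (add_right_injective j),
    Finset.card_range]

lemma memZ_eq {m : ℕ} (hm : 1 ≤ m) :
    {ω : Ω | m ∈ ZSet x n ω} = ⋃ j ∈ Finset.Icc 1 n, runS x j m := by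
  ext ω
  simp only [Set.mem_setOf_eq, ZSet, Set.mem_iUnion, Finset.mem_Icc, mem_runS]
  constructor
  · rintro ⟨-, j, hj1, hjn, hr⟩; exact ⟨j, ⟨hj1, hjn⟩, hr⟩
  · rintro ⟨j, ⟨hj1, hjn⟩, hr⟩; exact ⟨hm, j, hj1, hjn, hr⟩

lemma memZ_meas (hmeas : ∀ j, Measurable (x j)) (m : ℕ) :
    MeasurableSet {ω : Ω | m ∈ ZSet x n ω} := by
  rcases Nat.eq_zero_or_pos m with h0 | h1
  · have : {ω : Ω | m ∈ ZSet x n ω} = ∅ := by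
      ext ω; simp [ZSet, h0]
    rw [this]; exact MeasurableSet.empty
  · rw [memZ_eq h1]
    exact (Finset.Icc 1 n).measurableSet_biUnion fun j _ => runS_meas hmeas j m

lemma memZ_prob_le
    (hindep : iIndepFun x P)
    (hlaw : ∀ j, P {ω | x j ω = false} = 2⁻¹) {m : ℕ} (hm : 1 ≤ m) :
    P {ω : Ω | m ∈ ZSet x n ω} ≤ n * 2⁻¹ ^ m := by
  rw [memZ_eq hm]
  calc P (⋃ j ∈ Finset.Icc 1 n, runS x j m)
      ≤ ∑ j ∈ Finset.Icc 1 n, P (runS x j m) := measure_biUnion_finset_le _ _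
    _ = ∑ j ∈ Finset.Icc 1 n, 2⁻¹ ^ m := Finset.sum_congr rfl fun j _ => runS_prob hindep hlaw j m
    _ = n * 2⁻¹ ^ m := by
        rw [Finset.sum_const, Nat.card_Icc]
        simp [nsmul_eq_mul]

lemma unb_meas (hmeas : ∀ j, Measurable (x j)) :
    MeasurableSet {ω : Ω | Unb x n ω} := by
  have : {ω : Ω | Unb x n ω} = ⋂ m : ℕ, {ω | m + 1 ∈ ZSet x n ω} := by
    ext ω; simp [Unb, Set.mem_iInter]
  rw [this]
  exact MeasurableSet.iInter fun m => memZ_meas hmeas _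

lemma unb_prob_zero
    (hindep : iIndepFun x P)
    (hlaw : ∀ j, P {ω | x j ω = false} = 2⁻¹) :
    P {ω : Ω | Unb x n ω} = 0 := by
  have hle : ∀ m : ℕ, P {ω : Ω | Unb x n ω} ≤ n * 2⁻¹ ^ (m + 1) := by
    intro m
    refine le_trans (measure_mono fun ω hω => hω m) (memZ_prob_le hindep hlaw (by omega))
  have htend : Filter.Tendsto (fun m : ℕ => (n : ℝ≥0∞) * 2⁻¹ ^ (m + 1)) Filter.atTop (nhds 0) := by
    have h2 : Filter.Tendsto (fun m : ℕ => (2⁻¹ : ℝ≥0∞) ^ m) Filter.atTop (nhds 0) :=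
      ENNReal.tendsto_pow_atTop_nhds_zero_of_lt_one (by norm_num)
    have h3 : Filter.Tendsto (fun m : ℕ => (2⁻¹ : ℝ≥0∞) ^ (m + 1)) Filter.atTop (nhds 0) := by
      have := h2.comp (Filter.tendsto_add_atTop_nat 1)
      exact this
    have := ENNReal.Tendsto.const_mul h3 (Or.inr (ENNReal.natCast_ne_top n))
    simpa [mul_zero] using this
  exact le_antisymm (ge_of_tendsto' htend hle) bot_le

end Aux2
section Aux3
variable {Ω : Type*} [MeasurableSpace Ω] {P : Measure Ω} [IsProbabilityMeasure P]
  {x : ℕ → Ω → Bool} {n : ℕ}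

lemma Rf_meas (hmeas : ∀ j, Measurable (x j)) :
    Measurable (fun ω : Ω => sSup (ZSet x n ω)) := by
  apply measurable_to_countable'
  intro r
  have heq : (fun ω : Ω => sSup (ZSet x n ω)) ⁻¹' {r} =
      ({ω : Ω | r ∈ ZSet x n ω} ∩ {ω : Ω | r + 1 ∈ ZSet x n ω}ᶜ) ∪
       (({ω : Ω | (1:ℕ) ∈ ZSet x n ω}ᶜ ∪ {ω : Ω | Unb x n ω}) ∩ {ω : Ω | r = 0}) := by
    ext ω
    simp only [Set.mem_preimage, Set.mem_singleton_iff, Set.mem_union, Set.mem_inter_iff,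
      Set.mem_compl_iff, Set.mem_setOf_eq]
    rw [sSup_ZSet_eq_iff]
    tauto
  rw [heq]
  refine MeasurableSet.union ((memZ_meas hmeas r).inter (memZ_meas hmeas (r+1)).compl) ?_
  exact (((memZ_meas hmeas 1).compl.union (unb_meas hmeas)).inter (MeasurableSet.const _))

lemma tail_subset_memZ {r : ℕ} (hr : 1 ≤ r) :
    {ω : Ω | r ≤ sSup (ZSet x n ω)} ⊆ {ω : Ω | r ∈ ZSet x n ω} :=
  fun _ h => mem_ZSet_of_le_sSup hr h

lemma memZ_subset_tail {r : ℕ} :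
    {ω : Ω | r ∈ ZSet x n ω} ⊆ {ω : Ω | r ≤ sSup (ZSet x n ω)} ∪ {ω : Ω | Unb x n ω} := by
  intro ω hω
  by_cases hu : Unb x n ω
  · exact Or.inr hu
  · left
    rw [Unb] at hu
    push_neg at hu
    obtain ⟨m₀, hm₀⟩ := hu
    exact le_csSup (ZSet.bddAbove hm₀) hω

lemma tail_prob_le
    (hindep : iIndepFun x P)
    (hlaw : ∀ j, P {ω | x j ω = false} = 2⁻¹) {r : ℕ} (hr : 1 ≤ r) :
    P {ω : Ω | r ≤ sSup (ZSet x n ω)} ≤ n * 2⁻¹ ^ r :=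
  le_trans (measure_mono (tail_subset_memZ hr)) (memZ_prob_le hindep hlaw hr)

/-- Second-order Bonferroni inequality. -/
lemma bonferroni {A : ℕ → Set Ω} (hA : ∀ t, MeasurableSet (A t)) (T : Finset ℕ) :
    ∑ t ∈ T, P (A t) ≤ P (⋃ t ∈ T, A t) + ∑ p ∈ T.offDiag, P (A p.1 ∩ A p.2) := by
  classical
  have hUmeas : MeasurableSet (⋃ t ∈ T, A t) := T.measurableSet_biUnion fun t _ => hA t
  have hpt : ∀ ω : Ω, (∑ t ∈ T, (A t).indicator (fun _ => (1:ℝ≥0∞)) ω) ≤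
      (⋃ t ∈ T, A t).indicator (fun _ => (1:ℝ≥0∞)) ω
        + ∑ p ∈ T.offDiag, ((A p.1 ∩ A p.2).indicator (fun _ => (1:ℝ≥0∞)) ω) := by
    intro ω
    set F : Finset ℕ := T.filter (fun t => ω ∈ A t) with hF
    set k : ℕ := F.card with hk
    have hlhs : (∑ t ∈ T, (A t).indicator (fun _ => (1:ℝ≥0∞)) ω) = k := by
      simp only [Set.indicator_apply]
      rw [Finset.sum_boole]
    rw [hlhs]
    rcases Nat.eq_zero_or_pos k with h0 | h1
    · rw [h0]; simp
    · have hmemU : ω ∈ ⋃ t ∈ T, A t := by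
        obtain ⟨t, ht⟩ := Finset.card_pos.mp h1
        exact Set.mem_biUnion (Finset.mem_of_mem_filter t ht) (Finset.mem_filter.mp ht).2
      have hind : (⋃ t ∈ T, A t).indicator (fun _ => (1:ℝ≥0∞)) ω = 1 := by
        simp [Set.indicator_apply, hmemU]
      have hpairs : ((k * k - k : ℕ) : ℝ≥0∞) ≤
          ∑ p ∈ T.offDiag, ((A p.1 ∩ A p.2).indicator (fun _ => (1:ℝ≥0∞)) ω) := by
        have hsub : F.offDiag ⊆ T.offDiag := by
          intro p hp
          rw [Finset.mem_offDiag] at hp ⊢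
          exact ⟨Finset.mem_of_mem_filter _ hp.1, Finset.mem_of_mem_filter _ hp.2.1, hp.2.2⟩
        have hval : ∀ p ∈ F.offDiag, ((A p.1 ∩ A p.2).indicator (fun _ => (1:ℝ≥0∞)) ω) = 1 := by
          intro p hp
          rw [Finset.mem_offDiag] at hp
          have h1' := (Finset.mem_filter.mp hp.1).2
          have h2' := (Finset.mem_filter.mp hp.2.1).2
          simp [Set.indicator_apply, Set.mem_inter_iff, h1', h2']
        calc ((k * k - k : ℕ) : ℝ≥0∞) = (F.offDiag.card : ℝ≥0∞) := by
              rw [Finset.offDiag_card]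
            _ = ∑ p ∈ F.offDiag, ((A p.1 ∩ A p.2).indicator (fun _ => (1:ℝ≥0∞)) ω) := by
              rw [Finset.sum_congr rfl hval, Finset.sum_const, nsmul_eq_mul, mul_one]
            _ ≤ _ := Finset.sum_le_sum_of_subset hsub
      have hnat : (k : ℝ≥0∞) ≤ 1 + ((k * k - k : ℕ) : ℝ≥0∞) := by
        have : k ≤ 1 + (k * k - k) := by
          rcases k with _ | k'
          · omega
          · have h4 : (k'+1)*(k'+1) = (k'+1)*k' + (k'+1) := by ring
            have h5 : k' ≤ (k'+1)*k' := Nat.le_mul_of_pos_left _ (Nat.succ_pos _)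
            omega
        calc (k : ℝ≥0∞) ≤ ((1 + (k * k - k) : ℕ) : ℝ≥0∞) := by exact_mod_cast this
          _ = 1 + ((k * k - k : ℕ) : ℝ≥0∞) := by push_cast; ring
      calc (k : ℝ≥0∞) ≤ 1 + ((k * k - k : ℕ) : ℝ≥0∞) := hnat
        _ ≤ _ := by rw [hind]; exact add_le_add le_rfl hpairs
  have hmeasInd : ∀ t : ℕ, Measurable ((A t).indicator (fun _ : Ω => (1:ℝ≥0∞))) := fun t =>
    measurable_const.indicator (hA t)
  calc ∑ t ∈ T, P (A t)
      = ∑ t ∈ T, ∫⁻ ω, (A t).indicator (fun _ => (1:ℝ≥0∞)) ω ∂P := by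
        refine Finset.sum_congr rfl fun t _ => ?_
        rw [lintegral_indicator_const (hA t), one_mul]
    _ = ∫⁻ ω, ∑ t ∈ T, (A t).indicator (fun _ => (1:ℝ≥0∞)) ω ∂P := by
        rw [lintegral_finset_sum _ fun t _ => hmeasInd t]
    _ ≤ ∫⁻ ω, ((⋃ t ∈ T, A t).indicator (fun _ => (1:ℝ≥0∞)) ω
          + ∑ p ∈ T.offDiag, ((A p.1 ∩ A p.2).indicator (fun _ => (1:ℝ≥0∞)) ω)) ∂P :=
        lintegral_mono hpt
    _ = P (⋃ t ∈ T, A t) + ∑ p ∈ T.offDiag, P (A p.1 ∩ A p.2) := by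
        rw [lintegral_add_left ((measurable_const.indicator hUmeas)),
          lintegral_indicator_const hUmeas, one_mul,
          lintegral_finset_sum _ fun p _ => measurable_const.indicator ((hA p.1).inter (hA p.2))]
        congr 1
        refine Finset.sum_congr rfl fun p _ => ?_
        rw [lintegral_indicator_const ((hA p.1).inter (hA p.2)), one_mul]

end Aux3
section Aux4
variable {Ω : Type*} [MeasurableSpace Ω] {P : Measure Ω} [IsProbabilityMeasure P]
  {x : ℕ → Ω → Bool} {n : ℕ}

lemma allF_inter (s t : Finset ℕ) : allF x (s ∪ t) = allF x s ∩ allF x t := by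
  ext ω
  simp only [allF, Set.mem_iInter, Set.mem_inter_iff, Finset.mem_union]
  constructor
  · intro h; exact ⟨fun i hi => h i (Or.inl hi), fun i hi => h i (Or.inr hi)⟩
  · rintro ⟨h1, h2⟩ i (hi | hi)
    · exact h1 i hi
    · exact h2 i hi

lemma two_mul_inv_two : (2:ℝ≥0∞) * 2⁻¹ = 1 :=
  ENNReal.mul_inv_cancel (by norm_num) (by norm_num)

lemma add_halves_ennreal : (4⁻¹:ℝ≥0∞) + 4⁻¹ = 2⁻¹ := by
  have h4 : (4⁻¹:ℝ≥0∞) = 2⁻¹ * 2⁻¹ := by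
    rw [← ENNReal.mul_inv (Or.inl (by norm_num)) (Or.inl (by norm_num))]
    norm_num
  rw [h4, ← add_mul, ← two_mul, two_mul_inv_two, one_mul]

lemma inv_two_mul_inv_two : (2⁻¹:ℝ≥0∞) * 2⁻¹ = 4⁻¹ := by
  rw [← ENNReal.mul_inv (Or.inl (by norm_num)) (Or.inl (by norm_num))]
  norm_num

lemma pow_mul_inv_pow (j : ℕ) : (2:ℝ≥0∞) ^ j * 2⁻¹ ^ j = 1 := by
  rw [← mul_pow, two_mul_inv_two, one_pow]

lemma tail_prob_ge
    (hmeas : ∀ j, Measurable (x j))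
    (hindep : iIndepFun x P)
    (hlaw : ∀ j, P {ω | x j ω = false} = 2⁻¹) {k : ℕ} (hk : 1 ≤ k)
    (hfit : 2 ^ (k - 1) * k ≤ n) :
    4⁻¹ ≤ P {ω : Ω | k ≤ sSup (ZSet x n ω)} := by
  classical
  set K : ℕ := 2 ^ (k - 1) with hK
  have hK1 : 1 ≤ K := Nat.one_le_two_pow
  set A : ℕ → Set Ω := fun t => runS x (1 + t * k) k with hA
  have hAmeas : ∀ t, MeasurableSet (A t) := fun t => runS_meas hmeas _ _
  have hAp : ∀ t, P (A t) = 2⁻¹ ^ k := fun t => runS_prob hindep hlaw _ _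
  have hpair : ∀ t t', t ≠ t' → P (A t ∩ A t') = 2⁻¹ ^ (k + k) := by
    intro t t' hne
    have hdisj : Disjoint ((Finset.range k).image ((1 + t * k) + ·))
        ((Finset.range k).image ((1 + t' * k) + ·)) := by
      rw [Finset.disjoint_left]
      rintro a ha ha'
      obtain ⟨i, hi, rfl⟩ := Finset.mem_image.mp ha
      obtain ⟨i', hi', heq⟩ := Finset.mem_image.mp ha'
      rw [Finset.mem_range] at hi hi'
      apply hne
      have h2 : (i + t * k) / k = t := by
        rw [Nat.add_mul_div_right _ _ (by omega : 0 < k), Nat.div_eq_of_lt hi]; omega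
      have h3 : (i' + t' * k) / k = t' := by
        rw [Nat.add_mul_div_right _ _ (by omega : 0 < k), Nat.div_eq_of_lt hi']; omega
      rw [← h2, ← h3]
      congr 1
      omega
    have heq : A t ∩ A t' = allF x (((Finset.range k).image ((1 + t * k) + ·)) ∪
        ((Finset.range k).image ((1 + t' * k) + ·))) := by
      rw [allF_inter]; rfl
    rw [heq, allF_prob hindep hlaw, Finset.card_union_of_disjoint hdisj,
      Finset.card_image_of_injective _ (add_right_injective _),
      Finset.card_image_of_injective _ (add_right_injective _), Finset.card_range]
  have hbon := bonferroni (P := P) hAmeas (Finset.range K)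
  have hKval : (K : ℝ≥0∞) * 2⁻¹ ^ k = 2⁻¹ := by
    obtain ⟨j, rfl⟩ : ∃ j, k = j + 1 := ⟨k - 1, by omega⟩
    have hKj : K = 2 ^ j := by rw [hK]; congr 1
    rw [hKj]
    push_cast
    rw [pow_succ, ← mul_assoc, pow_mul_inv_pow, one_mul]
  have hsum1 : ∑ t ∈ Finset.range K, P (A t) = 2⁻¹ := by
    rw [Finset.sum_congr rfl fun t _ => hAp t, Finset.sum_const, Finset.card_range,
      nsmul_eq_mul, hKval]
  have hsum2 : ∑ p ∈ (Finset.range K).offDiag, P (A p.1 ∩ A p.2) ≤ 4⁻¹ := by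
    have hval : ∀ p ∈ (Finset.range K).offDiag, P (A p.1 ∩ A p.2) = 2⁻¹ ^ (k + k) := by
      intro p hp
      rw [Finset.mem_offDiag] at hp
      exact hpair _ _ hp.2.2
    have hcard : (((Finset.range K).offDiag.card : ℕ) : ℝ≥0∞) ≤ ((K * K : ℕ) : ℝ≥0∞) := by
      have : (Finset.range K).offDiag.card ≤ K * K := by
        rw [Finset.offDiag_card, Finset.card_range]; omega
      exact_mod_cast this
    rw [Finset.sum_congr rfl hval, Finset.sum_const, nsmul_eq_mul]
    calc ((Finset.range K).offDiag.card : ℝ≥0∞) * 2⁻¹ ^ (k + k)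
        ≤ ((K * K : ℕ) : ℝ≥0∞) * 2⁻¹ ^ (k + k) := mul_le_mul_left hcard _
      _ = ((K : ℝ≥0∞) * 2⁻¹ ^ k) * ((K : ℝ≥0∞) * 2⁻¹ ^ k) := by
          push_cast
          rw [pow_add]
          ring
      _ = 4⁻¹ := by rw [hKval, inv_two_mul_inv_two]
  have hUsub : (⋃ t ∈ Finset.range K, A t) ⊆
      {ω : Ω | k ≤ sSup (ZSet x n ω)} ∪ {ω : Ω | Unb x n ω} := by
    intro ω hω
    obtain ⟨t, ht, hωA⟩ := Set.mem_iUnion₂.mp hω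
    rw [Finset.mem_range] at ht
    have hmul : (t + 1) * k ≤ K * k := Nat.mul_le_mul_right k ht
    have hexp : (t + 1) * k = t * k + k := by ring
    have hjn : 1 + t * k ≤ n := by omega
    have hmemZ : k ∈ ZSet x n ω := ⟨hk, 1 + t * k, by omega, hjn, mem_runS.mp hωA⟩
    exact memZ_subset_tail hmemZ
  have hfinal : (2⁻¹ : ℝ≥0∞) ≤ P {ω : Ω | k ≤ sSup (ZSet x n ω)} + 4⁻¹ := by
    calc (2⁻¹ : ℝ≥0∞) = ∑ t ∈ Finset.range K, P (A t) := hsum1.symm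
      _ ≤ P (⋃ t ∈ Finset.range K, A t) + ∑ p ∈ (Finset.range K).offDiag,
            P (A p.1 ∩ A p.2) := hbon
      _ ≤ P ({ω : Ω | k ≤ sSup (ZSet x n ω)} ∪ {ω : Ω | Unb x n ω}) + 4⁻¹ :=
          add_le_add (measure_mono hUsub) hsum2
      _ ≤ (P {ω : Ω | k ≤ sSup (ZSet x n ω)} + P {ω : Ω | Unb x n ω}) + 4⁻¹ :=
          add_le_add (measure_union_le _ _) le_rfl
      _ = P {ω : Ω | k ≤ sSup (ZSet x n ω)} + 4⁻¹ := by
          rw [unb_prob_zero hindep hlaw, add_zero]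
  have hsub := tsub_le_iff_right.mpr hfinal
  have h24 : (2⁻¹:ℝ≥0∞) - 4⁻¹ = 4⁻¹ :=
    ENNReal.sub_eq_of_eq_add (by norm_num) add_halves_ennreal.symm
  rwa [h24] at hsub

end Aux4
section Aux5
variable {Ω : Type*} [MeasurableSpace Ω] {P : Measure Ω} [IsProbabilityMeasure P]
  {x : ℕ → Ω → Bool} {n : ℕ} {γ : ℝ}

lemma integrand_meas (hmeas : ∀ j, Measurable (x j)) :
    Measurable (fun ω : Ω => (2:ℝ) ^ (γ * ((sSup (ZSet x n ω) : ℕ) : ℝ))) :=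
  (measurable_from_top (f := fun r : ℕ => (2:ℝ) ^ (γ * (r:ℝ)))).comp (Rf_meas hmeas)

lemma integral_eq_lint (hmeas : ∀ j, Measurable (x j)) :
    ∫ ω, (2:ℝ) ^ (γ * ((sSup (ZSet x n ω) : ℕ) : ℝ)) ∂P =
      (∫⁻ ω, ENNReal.ofReal ((2:ℝ) ^ (γ * ((sSup (ZSet x n ω) : ℕ) : ℝ))) ∂P).toReal := by
  rw [integral_eq_lintegral_of_nonneg_ae (ae_of_all _ fun ω => Real.rpow_nonneg (by norm_num) _)
    (integrand_meas hmeas).aestronglyMeasurable]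

lemma lint_eq_tsum (hmeas : ∀ j, Measurable (x j)) :
    ∫⁻ ω, ENNReal.ofReal ((2:ℝ) ^ (γ * ((sSup (ZSet x n ω) : ℕ) : ℝ))) ∂P =
      ∑' r : ℕ, ENNReal.ofReal ((2:ℝ) ^ (γ * (r:ℝ))) *
        P ((fun ω : Ω => sSup (ZSet x n ω)) ⁻¹' {r}) := by
  have h1 : ∫⁻ ω, ENNReal.ofReal ((2:ℝ) ^ (γ * ((sSup (ZSet x n ω) : ℕ) : ℝ))) ∂P =
      ∫⁻ r, ENNReal.ofReal ((2:ℝ) ^ (γ * (r:ℝ)))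
        ∂(P.map (fun ω : Ω => sSup (ZSet x n ω))) := by
    rw [lintegral_map (measurable_from_top) (Rf_meas hmeas)]
  rw [h1, lintegral_countable']
  refine tsum_congr fun r => ?_
  rw [Measure.map_apply (Rf_meas hmeas) (measurableSet_singleton r)]

lemma one_le_lint (hγ : 0 ≤ γ) :
    1 ≤ ∫⁻ ω, ENNReal.ofReal ((2:ℝ) ^ (γ * ((sSup (ZSet x n ω) : ℕ) : ℝ))) ∂P := by
  have h : ∀ ω : Ω, (1:ℝ≥0∞) ≤ ENNReal.ofReal ((2:ℝ) ^ (γ * ((sSup (ZSet x n ω) : ℕ) : ℝ))) := by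
    intro ω
    rw [show (1:ℝ≥0∞) = ENNReal.ofReal 1 by simp]
    exact ENNReal.ofReal_le_ofReal (Real.one_le_rpow (by norm_num)
      (mul_nonneg hγ (Nat.cast_nonneg _)))
  calc (1:ℝ≥0∞) = ∫⁻ _, 1 ∂P := by rw [lintegral_one, measure_univ]
    _ ≤ _ := lintegral_mono h

lemma lint_lower (hmeas : ∀ j, Measurable (x j))
    (hindep : iIndepFun x P)
    (hlaw : ∀ j, P {ω | x j ω = false} = 2⁻¹) (hγ : 0 ≤ γ) {k : ℕ} (hk : 1 ≤ k)
    (hfit : 2 ^ (k - 1) * k ≤ n) :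
    ENNReal.ofReal ((2:ℝ) ^ (γ * (k:ℝ))) * 4⁻¹ ≤
      ∫⁻ ω, ENNReal.ofReal ((2:ℝ) ^ (γ * ((sSup (ZSet x n ω) : ℕ) : ℝ))) ∂P := by
  set s : Set Ω := {ω : Ω | k ≤ sSup (ZSet x n ω)} with hs
  calc ENNReal.ofReal ((2:ℝ) ^ (γ * (k:ℝ))) * 4⁻¹
      ≤ ENNReal.ofReal ((2:ℝ) ^ (γ * (k:ℝ))) * P s :=
        mul_le_mul_right (tail_prob_ge hmeas hindep hlaw hk hfit) _
    _ = ∫⁻ _ in s, ENNReal.ofReal ((2:ℝ) ^ (γ * (k:ℝ))) ∂P := by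
        rw [setLIntegral_const]
    _ ≤ ∫⁻ ω in s, ENNReal.ofReal ((2:ℝ) ^ (γ * ((sSup (ZSet x n ω) : ℕ) : ℝ))) ∂P := by
        refine setLIntegral_mono ((measurable_from_top
          (f := fun r : ℕ => ENNReal.ofReal ((2:ℝ) ^ (γ * (r:ℝ))))).comp (Rf_meas hmeas))
          fun ω hω => ?_
        refine ENNReal.ofReal_le_ofReal ?_
        refine Real.rpow_le_rpow_of_exponent_le (by norm_num) ?_
        exact mul_le_mul_of_nonneg_left (Nat.cast_le.mpr hω) hγ
    _ ≤ _ := setLIntegral_le_lintegral _ _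

lemma lint_upper (hmeas : ∀ j, Measurable (x j))
    (hindep : iIndepFun x P)
    (hlaw : ∀ j, P {ω | x j ω = false} = 2⁻¹) (hγ : 0 ≤ γ) {γ' : ℝ}
    (hγγ' : γ < γ') (hγ'1 : γ' ≤ 1) (hn : 1 ≤ n) :
    ∫⁻ ω, ENNReal.ofReal ((2:ℝ) ^ (γ * ((sSup (ZSet x n ω) : ℕ) : ℝ))) ∂P ≤
      ENNReal.ofReal ((n:ℝ) ^ γ') * (1 - ENNReal.ofReal ((2:ℝ) ^ (γ - γ')))⁻¹ := by
  have hγ'0 : 0 < γ' := lt_of_le_of_lt hγ hγγ'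
  have hn0 : (0:ℝ) < n := by exact_mod_cast hn
  rw [lint_eq_tsum hmeas]
  have hterm : ∀ r : ℕ, ENNReal.ofReal ((2:ℝ) ^ (γ * (r:ℝ))) *
      P ((fun ω : Ω => sSup (ZSet x n ω)) ⁻¹' {r}) ≤
      ENNReal.ofReal ((n:ℝ) ^ γ') * ENNReal.ofReal ((2:ℝ) ^ (γ - γ')) ^ r := by
    intro r
    have hy0 : (0:ℝ) < (n:ℝ) * (2⁻¹:ℝ) ^ r := by positivity
    have hprob : P ((fun ω : Ω => sSup (ZSet x n ω)) ⁻¹' {r}) ≤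
        ENNReal.ofReal (((n:ℝ) * (2⁻¹:ℝ) ^ r) ^ γ') := by
      rcases Nat.eq_zero_or_pos r with hr0 | hr1
      · subst hr0
        calc P _ ≤ 1 := prob_le_one
          _ ≤ _ := by
              rw [show (1:ℝ≥0∞) = ENNReal.ofReal 1 by simp]
              refine ENNReal.ofReal_le_ofReal (Real.one_le_rpow ?_ (le_of_lt hγ'0))
              have h1n : (1:ℝ) ≤ (n:ℝ) := by exact_mod_cast hn
              simpa using h1n
      · have hmin : P ((fun ω : Ω => sSup (ZSet x n ω)) ⁻¹' {r}) ≤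
            min 1 ((n:ℝ≥0∞) * 2⁻¹ ^ r) := by
          refine le_min prob_le_one ?_
          refine le_trans (measure_mono ?_) (tail_prob_le hindep hlaw hr1)
          intro ω hω
          rw [Set.mem_preimage, Set.mem_singleton_iff] at hω
          exact le_of_eq hω.symm
        have hcast : (n:ℝ≥0∞) * 2⁻¹ ^ r = ENNReal.ofReal ((n:ℝ) * (2⁻¹:ℝ) ^ r) := by
          rw [ENNReal.ofReal_mul (Nat.cast_nonneg n), ENNReal.ofReal_pow (by norm_num),
            ENNReal.ofReal_natCast]
          congr 2
          rw [ENNReal.ofReal_inv_of_pos (by norm_num)]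
          norm_num
        refine le_trans hmin ?_
        rcases le_or_gt ((n:ℝ) * (2⁻¹:ℝ) ^ r) 1 with hy1 | hy1
        · refine le_trans (min_le_right _ _) ?_
          rw [hcast]
          refine ENNReal.ofReal_le_ofReal ?_
          calc (n:ℝ) * (2⁻¹:ℝ) ^ r = ((n:ℝ) * (2⁻¹:ℝ) ^ r) ^ (1:ℝ) := (Real.rpow_one _).symm
            _ ≤ _ := Real.rpow_le_rpow_of_exponent_ge hy0 hy1 hγ'1
        · refine le_trans (min_le_left _ _) ?_
          rw [show (1:ℝ≥0∞) = ENNReal.ofReal 1 by simp]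
          exact ENNReal.ofReal_le_ofReal (Real.one_le_rpow hy1.le (le_of_lt hγ'0))
    have hreal : (2:ℝ) ^ (γ * (r:ℝ)) * (((n:ℝ) * (2⁻¹:ℝ) ^ r) ^ γ') =
        (n:ℝ) ^ γ' * ((2:ℝ) ^ (γ - γ')) ^ r := by
      have hi : (2⁻¹:ℝ) ^ r = (2:ℝ) ^ (-(r:ℝ)) := by
        rw [inv_pow, ← Real.rpow_natCast (2:ℝ) r, ← Real.rpow_neg (by norm_num : (0:ℝ) ≤ 2)]
      have hp : ((2:ℝ) ^ (γ - γ')) ^ r = (2:ℝ) ^ ((γ - γ') * (r:ℝ)) := by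
        rw [← Real.rpow_natCast ((2:ℝ) ^ (γ - γ')) r,
          ← Real.rpow_mul (by norm_num : (0:ℝ) ≤ 2)]
      rw [hi, hp, Real.mul_rpow hn0.le (Real.rpow_nonneg (by norm_num) _),
        ← Real.rpow_mul (by norm_num : (0:ℝ) ≤ 2), ← mul_assoc,
        mul_comm ((2:ℝ) ^ (γ * (r:ℝ))) ((n:ℝ) ^ γ'), mul_assoc,
        ← Real.rpow_add (by norm_num : (0:ℝ) < 2)]
      congr 1
      ring
    calc ENNReal.ofReal ((2:ℝ) ^ (γ * (r:ℝ))) * P ((fun ω : Ω => sSup (ZSet x n ω)) ⁻¹' {r})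
        ≤ ENNReal.ofReal ((2:ℝ) ^ (γ * (r:ℝ))) *
            ENNReal.ofReal (((n:ℝ) * (2⁻¹:ℝ) ^ r) ^ γ') := mul_le_mul_right hprob _
      _ = ENNReal.ofReal ((2:ℝ) ^ (γ * (r:ℝ)) * (((n:ℝ) * (2⁻¹:ℝ) ^ r) ^ γ')) :=
          (ENNReal.ofReal_mul (Real.rpow_nonneg (by norm_num) _)).symm
      _ = ENNReal.ofReal ((n:ℝ) ^ γ' * ((2:ℝ) ^ (γ - γ')) ^ r) := by rw [hreal]
      _ = ENNReal.ofReal ((n:ℝ) ^ γ') * ENNReal.ofReal ((2:ℝ) ^ (γ - γ')) ^ r := by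
          rw [ENNReal.ofReal_mul (Real.rpow_nonneg hn0.le _),
            ENNReal.ofReal_pow (Real.rpow_nonneg (by norm_num) _)]
  calc ∑' r : ℕ, ENNReal.ofReal ((2:ℝ) ^ (γ * (r:ℝ))) *
        P ((fun ω : Ω => sSup (ZSet x n ω)) ⁻¹' {r})
      ≤ ∑' r : ℕ, ENNReal.ofReal ((n:ℝ) ^ γ') * ENNReal.ofReal ((2:ℝ) ^ (γ - γ')) ^ r :=
        ENNReal.tsum_le_tsum hterm
    _ = ENNReal.ofReal ((n:ℝ) ^ γ') * ∑' r : ℕ, ENNReal.ofReal ((2:ℝ) ^ (γ - γ')) ^ r :=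
        ENNReal.tsum_mul_left
    _ = ENNReal.ofReal ((n:ℝ) ^ γ') * (1 - ENNReal.ofReal ((2:ℝ) ^ (γ - γ')))⁻¹ := by
        rw [ENNReal.tsum_geometric]

end Aux5
section Aux6
open Filter

lemma eventually_logb_le_rpow {δ : ℝ} (hδ0 : 0 < δ) :
    ∀ᶠ y : ℝ in atTop, Real.logb 2 y + 1 ≤ y ^ δ := by
  have h1 : Tendsto (fun y : ℝ => Real.log y / y ^ δ) atTop (nhds 0) :=
    (isLittleO_log_rpow_atTop hδ0).tendsto_div_nhds_zero
  have h2 : Tendsto (fun y : ℝ => (y ^ δ)⁻¹) atTop (nhds 0) :=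
    (tendsto_rpow_atTop hδ0).inv_tendsto_atTop
  have h3 : Tendsto (fun y : ℝ => Real.log y / y ^ δ * (Real.log 2)⁻¹ + (y ^ δ)⁻¹) atTop
      (nhds 0) := by
    have := (h1.mul_const (Real.log 2)⁻¹).add h2
    simpa using this
  have h4 := h3.eventually (eventually_lt_nhds (by norm_num : (0:ℝ) < 1))
  filter_upwards [h4, eventually_gt_atTop (1:ℝ)] with y hy hy1
  have hyδ : 0 < y ^ δ := Real.rpow_pos_of_pos (by linarith) δ
  have hlog2 : Real.log 2 ≠ 0 := by
    have := Real.log_pos (by norm_num : (1:ℝ) < 2); linarith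
  have hval : Real.logb 2 y + 1 =
      (Real.log y / y ^ δ * (Real.log 2)⁻¹ + (y ^ δ)⁻¹) * y ^ δ := by
    rw [Real.logb]
    field_simp
  rw [hval]
  calc (Real.log y / y ^ δ * (Real.log 2)⁻¹ + (y ^ δ)⁻¹) * y ^ δ
      ≤ 1 * y ^ δ := mul_le_mul_of_nonneg_right hy.le hyδ.le
    _ = y ^ δ := one_mul _

lemma eventually_fit {δ : ℝ} (hδ0 : 0 < δ) (hδ1 : δ < 1) :
    ∀ᶠ n : ℕ in atTop,
      2 ^ ⌊(1 - δ) * Real.logb 2 (n:ℝ)⌋₊ * (⌊(1 - δ) * Real.logb 2 (n:ℝ)⌋₊ + 1) ≤ n := by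
  filter_upwards [tendsto_natCast_atTop_atTop.eventually (eventually_logb_le_rpow hδ0),
    eventually_ge_atTop 2] with n hlog hn2
  set u := (1 - δ) * Real.logb 2 (n:ℝ) with hu
  have hn1 : (1:ℝ) ≤ (n:ℝ) := by exact_mod_cast (by omega : 1 ≤ n)
  have hn0 : (0:ℝ) < (n:ℝ) := by linarith
  have hlb0 : 0 ≤ Real.logb 2 (n:ℝ) := Real.logb_nonneg (by norm_num) hn1
  have hu0 : 0 ≤ u := mul_nonneg (by linarith) hlb0
  have h2pow : (2:ℝ) ^ (⌊u⌋₊ : ℕ) ≤ (n:ℝ) ^ (1 - δ) := by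
    calc ((2:ℝ) ^ (⌊u⌋₊:ℕ)) = (2:ℝ) ^ ((⌊u⌋₊:ℕ):ℝ) := (Real.rpow_natCast 2 _).symm
      _ ≤ (2:ℝ) ^ u := Real.rpow_le_rpow_of_exponent_le (by norm_num) (Nat.floor_le hu0)
      _ = (2:ℝ) ^ (Real.logb 2 (n:ℝ) * (1 - δ)) := by rw [hu, mul_comm]
      _ = ((2:ℝ) ^ Real.logb 2 (n:ℝ)) ^ (1 - δ) := Real.rpow_mul (by norm_num) _ _
      _ = (n:ℝ) ^ (1 - δ) := by rw [Real.rpow_logb (by norm_num) (by norm_num) hn0]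
  have hk : ((⌊u⌋₊ + 1 : ℕ) : ℝ) ≤ Real.logb 2 (n:ℝ) + 1 := by
    push_cast
    have hfl : (⌊u⌋₊:ℝ) ≤ u := Nat.floor_le hu0
    have hu_le : u ≤ Real.logb 2 (n:ℝ) := by nlinarith
    linarith
  have hmain : (2:ℝ) ^ (⌊u⌋₊:ℕ) * ((⌊u⌋₊ + 1 : ℕ):ℝ) ≤ (n:ℝ) := by
    calc (2:ℝ) ^ (⌊u⌋₊:ℕ) * ((⌊u⌋₊ + 1 : ℕ):ℝ)
        ≤ (n:ℝ) ^ (1 - δ) * (Real.logb 2 (n:ℝ) + 1) := by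
          refine mul_le_mul h2pow hk (by positivity) (by positivity)
      _ ≤ (n:ℝ) ^ (1 - δ) * (n:ℝ) ^ δ := mul_le_mul_of_nonneg_left hlog (by positivity)
      _ = (n:ℝ) := by
          rw [← Real.rpow_add hn0]
          norm_num
  exact_mod_cast hmain

end Aux6

/-- Let `(x_j)_{j ≥ 1}` be i.i.d. Bernoulli(1/2) digits and `R_n` the longest run of
zeroes starting in `{1, …, n}`. Then for every `0 < γ < 1`,
`log₂ E[2^{γ R_n}] / log₂ n → γ`. -/
theorem stmt15 {Ω : Type*} [MeasurableSpace Ω] (P : Measure Ω)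
    [IsProbabilityMeasure P]
    (x : ℕ → Ω → Bool)
    (hmeas : ∀ j, Measurable (x j))
    (hindep : iIndepFun x P)
    (hlaw : ∀ j, P {ω | x j ω = false} = 2⁻¹)
    (R : ℕ → Ω → ℕ)
    (hR : ∀ n ω, R n ω =
      sSup {m : ℕ | 1 ≤ m ∧ ∃ j, 1 ≤ j ∧ j ≤ n ∧ ∀ i < m, x (j + i) ω = false}) :
    ∀ γ : ℝ, 0 < γ → γ < 1 →
      Tendsto (fun n : ℕ =>
          Real.logb 2 (∫ ω, (2 : ℝ) ^ (γ * (R n ω : ℝ)) ∂P) / Real.logb 2 n)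
        atTop (nhds γ) := by
  intro γ hγ0 hγ1
  have hγ0' : (0:ℝ) ≤ γ := hγ0.le
  have hfeq : (fun n : ℕ =>
      Real.logb 2 (∫ ω, (2 : ℝ) ^ (γ * (R n ω : ℝ)) ∂P) / Real.logb 2 n) =
      fun n : ℕ => Real.logb 2
        (∫ ω, (2 : ℝ) ^ (γ * ((sSup (ZSet x n ω) : ℕ) : ℝ)) ∂P) / Real.logb 2 n := by
    funext n
    congr 2
    · congr 1
      funext ω
      rw [hR n ω]
      rfl
  rw [hfeq]
  set L : ℕ → ℝ≥0∞ :=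
    fun n => ∫⁻ ω, ENNReal.ofReal ((2:ℝ) ^ (γ * ((sSup (ZSet x n ω) : ℕ) : ℝ))) ∂P with hLdef
  have hIL : ∀ n : ℕ, (∫ ω, (2:ℝ) ^ (γ * ((sSup (ZSet x n ω) : ℕ) : ℝ)) ∂P) = (L n).toReal :=
    fun n => integral_eq_lint hmeas
  have hmid : γ < (γ+1)/2 := by linarith
  have hmid1 : (γ+1)/2 ≤ 1 := by linarith
  have hq : ∀ γ' : ℝ, γ < γ' → ENNReal.ofReal ((2:ℝ) ^ (γ - γ')) < 1 := by
    intro γ' h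
    rw [ENNReal.ofReal_lt_one]
    exact Real.rpow_lt_one_of_one_lt_of_neg (by norm_num) (by linarith)
  have hcne : ∀ γ' : ℝ, γ < γ' → (1 - ENNReal.ofReal ((2:ℝ) ^ (γ - γ')))⁻¹ ≠ ⊤ := by
    intro γ' h
    rw [Ne, ENNReal.inv_eq_top, tsub_eq_zero_iff_le]
    exact not_le_of_gt (hq γ' h)
  have hfin : ∀ n : ℕ, 1 ≤ n → L n ≠ ⊤ := by
    intro n hn
    refine ne_top_of_le_ne_top ?_ (lint_upper hmeas hindep hlaw hγ0' hmid hmid1 hn)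
    exact ENNReal.mul_ne_top ENNReal.ofReal_ne_top (hcne _ hmid)
  have hI1 : ∀ n : ℕ, 1 ≤ n → 1 ≤ (L n).toReal := by
    intro n hn
    have h := ENNReal.toReal_mono (hfin n hn) (one_le_lint (γ := γ) hγ0')
    simpa using h
  have hlogtop : Tendsto (fun n : ℕ => Real.logb 2 (n:ℝ)) atTop atTop :=
    (Real.tendsto_logb_atTop (by norm_num : (1:ℝ) < 2)).comp tendsto_natCast_atTop_atTop
  refine tendsto_order.2 ⟨?_, ?_⟩
  · -- lower bound: ∀ a < γ, eventually a < f n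
    intro a ha
    set δ : ℝ := min ((γ - a)/(2*γ)) 2⁻¹ with hδdef
    have hδ0 : 0 < δ := lt_min (div_pos (by linarith) (by linarith)) (by norm_num)
    have hδ1 : δ < 1 := lt_of_le_of_lt (min_le_right _ _) (by norm_num)
    set β : ℝ := γ * (1 - δ) with hβdef
    have haβ : a < β := by
      have h1 : δ ≤ (γ - a)/(2*γ) := min_le_left _ _
      have h2 : γ * δ ≤ γ * ((γ - a)/(2*γ)) := mul_le_mul_of_nonneg_left h1 hγ0'
      have h3 : γ * ((γ - a)/(2*γ)) = (γ - a)/2 := by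
        field_simp
      rw [hβdef]
      nlinarith
    have hc4 : Tendsto (fun n : ℕ => β - Real.logb 2 4 / Real.logb 2 (n:ℝ)) atTop (nhds β) := by
      have h : Tendsto (fun n : ℕ => β - Real.logb 2 4 / Real.logb 2 (n:ℝ)) atTop
          (nhds (β - 0)) :=
        Tendsto.sub tendsto_const_nhds (Tendsto.div_atTop tendsto_const_nhds hlogtop)
      simpa using h
    filter_upwards [eventually_fit hδ0 hδ1, hc4.eventually (eventually_gt_nhds haβ),
      eventually_ge_atTop 2] with n hfitn hgt hn2
    rw [hIL n]
    set u : ℝ := (1 - δ) * Real.logb 2 (n:ℝ) with hu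
    have hn1' : 1 ≤ n := by omega
    have hnR1 : (1:ℝ) < (n:ℝ) := by exact_mod_cast (by omega : 1 < n)
    have hnpos : (0:ℝ) < (n:ℝ) := by linarith
    have hlb : 0 < Real.logb 2 (n:ℝ) := Real.logb_pos (by norm_num) hnR1
    have hu0 : 0 ≤ u := mul_nonneg (by linarith) hlb.le
    set k : ℕ := ⌊u⌋₊ + 1 with hk
    have hk1 : 1 ≤ k := by omega
    have hfit' : 2 ^ (k - 1) * k ≤ n := by
      simpa [hk] using hfitn
    have hlow := lint_lower (n := n) hmeas hindep hlaw hγ0' hk1 hfit'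
    have hIlow : (2:ℝ) ^ (γ * (k:ℝ)) * 4⁻¹ ≤ (L n).toReal := by
      have h := ENNReal.toReal_mono (hfin n hn1') hlow
      rw [ENNReal.toReal_mul, ENNReal.toReal_ofReal (Real.rpow_nonneg (by norm_num) _)] at h
      simpa using h
    have hk_ge : u ≤ (k:ℝ) := by
      rw [hk]
      push_cast
      have h := Nat.lt_floor_add_one u
      linarith
    have hpow : (n:ℝ) ^ β ≤ (2:ℝ) ^ (γ * (k:ℝ)) := by
      calc (n:ℝ) ^ β = ((2:ℝ) ^ Real.logb 2 (n:ℝ)) ^ β := by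
            rw [Real.rpow_logb (by norm_num) (by norm_num) hnpos]
        _ = (2:ℝ) ^ (Real.logb 2 (n:ℝ) * β) := (Real.rpow_mul (by norm_num) _ _).symm
        _ = (2:ℝ) ^ (γ * u) := by
            rw [hu, hβdef]
            ring_nf
        _ ≤ (2:ℝ) ^ (γ * (k:ℝ)) := Real.rpow_le_rpow_of_exponent_le (by norm_num)
            (mul_le_mul_of_nonneg_left hk_ge hγ0')
    have hIn : (n:ℝ) ^ β * 4⁻¹ ≤ (L n).toReal := by
      refine le_trans ?_ hIlow
      nlinarith [hpow]
    have hlogI : β * Real.logb 2 (n:ℝ) - Real.logb 2 4 ≤ Real.logb 2 ((L n).toReal) := by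
      have hx : (0:ℝ) < (n:ℝ) ^ β * 4⁻¹ := by positivity
      calc β * Real.logb 2 (n:ℝ) - Real.logb 2 4
          = Real.logb 2 ((n:ℝ) ^ β * 4⁻¹) := by
            rw [Real.logb_mul (by positivity) (by norm_num),
              Real.logb_rpow_eq_mul_logb_of_pos hnpos, Real.logb_inv]
            ring
        _ ≤ Real.logb 2 ((L n).toReal) :=
            (Real.logb_le_logb (by norm_num) hx (by linarith [hI1 n hn1'])).mpr hIn
    have hdivle : (β * Real.logb 2 (n:ℝ) - Real.logb 2 4) / Real.logb 2 (n:ℝ) ≤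
        Real.logb 2 ((L n).toReal) / Real.logb 2 (n:ℝ) := by
      gcongr
    have hcomp : (β * Real.logb 2 (n:ℝ) - Real.logb 2 4) / Real.logb 2 (n:ℝ) =
        β - Real.logb 2 4 / Real.logb 2 (n:ℝ) := by
      rw [sub_div, mul_div_cancel_right₀ _ (ne_of_gt hlb)]
    rw [hcomp] at hdivle
    linarith
  · -- upper bound: ∀ b > γ, eventually f n < b
    intro b hb
    set γ' : ℝ := min ((γ+b)/2) ((γ+1)/2) with hγ'def
    have hγγ' : γ < γ' := lt_min (by linarith) (by linarith)
    have hγ'le1 : γ' ≤ 1 := le_trans (min_le_right _ _) (by linarith)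
    have hγ'b : γ' < b := lt_of_le_of_lt (min_le_left _ _) (by linarith)
    set C : ℝ := max ((1 - ENNReal.ofReal ((2:ℝ) ^ (γ - γ')))⁻¹).toReal 1 with hCdef
    have hC1 : (1:ℝ) ≤ C := le_max_right _ _
    have hCpos : (0:ℝ) < C := by linarith
    have hIub : ∀ n : ℕ, 1 ≤ n → (L n).toReal ≤ (n:ℝ) ^ γ' * C := by
      intro n hn
      have hb1 := lint_upper (n := n) hmeas hindep hlaw hγ0' hγγ' hγ'le1 hn
      have h2 := ENNReal.toReal_mono
        (ENNReal.mul_ne_top ENNReal.ofReal_ne_top (hcne _ hγγ')) hb1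
      rw [ENNReal.toReal_mul,
        ENNReal.toReal_ofReal (Real.rpow_nonneg (Nat.cast_nonneg n) _)] at h2
      refine le_trans h2 ?_
      exact mul_le_mul_of_nonneg_left (le_max_left _ _) (Real.rpow_nonneg (Nat.cast_nonneg n) _)
    have hdiv : Tendsto (fun n : ℕ => γ' + Real.logb 2 C / Real.logb 2 (n:ℝ)) atTop
        (nhds γ') := by
      have h : Tendsto (fun n : ℕ => γ' + Real.logb 2 C / Real.logb 2 (n:ℝ)) atTop
          (nhds (γ' + 0)) :=
        Tendsto.add tendsto_const_nhds (Tendsto.div_atTop tendsto_const_nhds hlogtop)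
      simpa using h
    filter_upwards [hdiv.eventually (eventually_lt_nhds hγ'b),
      eventually_ge_atTop 2] with n hn1 hn2
    rw [hIL n]
    have hn1' : 1 ≤ n := by omega
    have hnR1 : (1:ℝ) < (n:ℝ) := by exact_mod_cast (by omega : 1 < n)
    have hnpos : (0:ℝ) < (n:ℝ) := by linarith
    have hlb : 0 < Real.logb 2 (n:ℝ) := Real.logb_pos (by norm_num) hnR1
    have hIn1 := hI1 n hn1'
    have hlogI : Real.logb 2 ((L n).toReal) ≤ γ' * Real.logb 2 (n:ℝ) + Real.logb 2 C := by
      calc Real.logb 2 ((L n).toReal) ≤ Real.logb 2 ((n:ℝ) ^ γ' * C) :=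
            (Real.logb_le_logb (by norm_num) (by linarith) (by positivity)).mpr (hIub n hn1')
        _ = γ' * Real.logb 2 (n:ℝ) + Real.logb 2 C := by
            rw [Real.logb_mul (by positivity) (by positivity),
              Real.logb_rpow_eq_mul_logb_of_pos hnpos]
    have hdivle : Real.logb 2 ((L n).toReal) / Real.logb 2 (n:ℝ) ≤
        (γ' * Real.logb 2 (n:ℝ) + Real.logb 2 C) / Real.logb 2 (n:ℝ) := by
      gcongr
    have hcomp : (γ' * Real.logb 2 (n:ℝ) + Real.logb 2 C) / Real.logb 2 (n:ℝ) =
        γ' + Real.logb 2 C / Real.logb 2 (n:ℝ) := by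
      rw [add_div, mul_div_cancel_right₀ _ (ne_of_gt hlb)]
    rw [hcomp] at hdivle
    linarith
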